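/- Let d ≥ 1, let S ⊆ ℝ^d be nonempty, let x ∈ ℝ^d and t > 0, and let (e_i)_{i=1}^d be the standard basis of ℝ^d. Suppose that S ∩ B(x,t) ≠ ∅ and that S ∩ B(x + 3√d·t·e_i, t) ≠ ∅ and S ∩ B(x − 3√d·t·e_i, t) ≠ ∅ for every i = 1,…,d, where B(y,s) denotes the open Euclidean ball of radius s around y. Then: (a) every point p ∈ S minimizing the Euclidean distance to x satisfies |p − x| < t; and (b) for every z ∈ ℝ^d with |z − x| > 9d√d·t there exists u ∈ S such that |z − u| < |z − w| for every w ∈ S ∩ B(x,t). In particular, no point z with |z − x| > 9d√d·t can have its nearest point of S inside B(x,t). -/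

import Mathlib

open Metric

lemma sqrt_key (d : ℕ) (hd : 1 ≤ d) (t R D : ℝ) (ht : 0 < t)
    (hR : 9 * d * Real.sqrt d * t < R)
    (hD : D ^ 2 ≤ R ^ 2 - 6 * t * R + 9 * d * t ^ 2) (hDnn : 0 ≤ D) :
    D < R - 2 * t := by
  have hs : (1:ℝ) ≤ Real.sqrt d := by
    rw [show (1:ℝ) = Real.sqrt 1 by simp]
    exact Real.sqrt_le_sqrt (by exact_mod_cast hd)
  have hd' : (1:ℝ) ≤ (d:ℝ) := by exact_mod_cast hd
  have hmul : (1:ℝ) * 1 ≤ (d:ℝ) * Real.sqrt d :=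
    mul_le_mul hd' hs zero_le_one (le_trans zero_le_one hd')
  have h9 : 9 * t < R := by nlinarith
  have hdd : (d:ℝ) * 1 ≤ (d:ℝ) * Real.sqrt d :=
    mul_le_mul_of_nonneg_left hs (le_trans zero_le_one hd')
  have htR : t * (9 * d * Real.sqrt d * t) < t * R := by
    exact mul_lt_mul_of_pos_left hR ht
  have hlt : D ^ 2 < (R - 2 * t) ^ 2 := by nlinarith
  exact lt_of_pow_lt_pow_left₀ 2 (by nlinarith) hlt

/-- geometric lemma on nearest points.  If `S` meets the ball `B(x,t)` and the
`2d` balls `B(x ± 3√d·t·e_i, t)`, then (a) every point of `S` minimizing the distance to `x`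
lies in `B(x,t)`, and (b) any `z` with `|z − x| > 9d√d·t` has a point of `S` strictly closer
to it than every point of `S ∩ B(x,t)`. -/
theorem nearest_point_geometric_lemma (d : ℕ) (hd : 1 ≤ d)
    (S : Set (EuclideanSpace ℝ (Fin d))) (hS : S.Nonempty)
    (x : EuclideanSpace ℝ (Fin d)) (t : ℝ) (ht : 0 < t)
    (h0 : (S ∩ Metric.ball x t).Nonempty)
    (hplus : ∀ i : Fin d,
      (S ∩ Metric.ball (x + (3 * Real.sqrt d * t) • EuclideanSpace.single i (1 : ℝ)) t).Nonempty)
    (hminus : ∀ i : Fin d,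
      (S ∩ Metric.ball (x - (3 * Real.sqrt d * t) • EuclideanSpace.single i (1 : ℝ)) t).Nonempty) :
    (∀ p ∈ S, (∀ w ∈ S, dist p x ≤ dist w x) → dist p x < t) ∧
    (∀ z : EuclideanSpace ℝ (Fin d), 9 * (d : ℝ) * Real.sqrt d * t < dist z x →
      ∃ u ∈ S, ∀ w ∈ S ∩ Metric.ball x t, dist z u < dist z w) := by
  obtain ⟨q, hqS, hq⟩ := h0
  constructor
  · intro p hp hmin
    exact lt_of_le_of_lt (hmin q hqS) (mem_ball.mp hq)
  · intro z hz
    set v : EuclideanSpace ℝ (Fin d) := z - x with hv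
    have hRdef : dist z x = ‖v‖ := dist_eq_norm z x
    set R : ℝ := ‖v‖ with hRv
    rw [hRdef] at hz
    -- find coordinate with max |v i|
    have hne : (Finset.univ : Finset (Fin d)).Nonempty := by
      have : Nonempty (Fin d) := ⟨⟨0, hd⟩⟩
      exact Finset.univ_nonempty
    obtain ⟨i, -, hi⟩ := Finset.exists_max_image Finset.univ (fun j => |v j|) hne
    have hsd : (0:ℝ) ≤ Real.sqrt d := Real.sqrt_nonneg _
    have hs1 : (1:ℝ) ≤ Real.sqrt d := by
      rw [show (1:ℝ) = Real.sqrt 1 by simp]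
      exact Real.sqrt_le_sqrt (by exact_mod_cast hd)
    -- R ≤ √d * |v i|
    have hnormsq : R ^ 2 = ∑ j, (v j) ^ 2 := by
      rw [hRv, EuclideanSpace.norm_eq, Real.sq_sqrt]
      · simp [Real.norm_eq_abs, sq_abs]
      · positivity
    have hsum : R ^ 2 ≤ (d : ℝ) * (v i) ^ 2 := by
      rw [hnormsq]
      calc ∑ j, (v j) ^ 2 ≤ ∑ _j : Fin d, (v i) ^ 2 := by
            apply Finset.sum_le_sum
            intro j _
            have := hi j (Finset.mem_univ j)
            nlinarith [abs_nonneg (v j), abs_nonneg (v i), sq_abs (v j), sq_abs (v i)]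
        _ = (d : ℝ) * (v i) ^ 2 := by simp [Finset.sum_const, mul_comm]
    have hRle : R ≤ Real.sqrt d * |v i| := by
      have h1 : (Real.sqrt d * |v i|) ^ 2 = (d : ℝ) * (v i) ^ 2 := by
        rw [mul_pow, Real.sq_sqrt (by positivity), sq_abs]
      have h2 : R ^ 2 ≤ (Real.sqrt d * |v i|) ^ 2 := by rw [h1]; exact hsum
      exact le_of_pow_le_pow_left₀ (by norm_num) (by positivity) h2
    set a : ℝ := 3 * Real.sqrt d * t with ha
    have hanonneg : 0 ≤ a := by positivity
    -- key distance bound for center c with ‖z - c‖² ≤ R² - 6tR + 9dt²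
    have key : ∀ c : EuclideanSpace ℝ (Fin d),
        ‖z - c‖ ^ 2 ≤ R ^ 2 - 6 * t * R + 9 * d * t ^ 2 →
        (∃ u ∈ S, dist u c < t) →
        ∃ u ∈ S, ∀ w ∈ S ∩ Metric.ball x t, dist z u < dist z w := by
      intro c hc ⟨u, huS, huc⟩
      have hzc : dist z c < R - 2 * t := by
        have := sqrt_key d hd t R (dist z c) ht hz (by rwa [dist_eq_norm]) dist_nonneg
        exact this
      refine ⟨u, huS, fun w ⟨hwS, hw⟩ => ?_⟩
      have h1 : dist z u ≤ dist z c + dist c u := dist_triangle z c u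
      have h2 : dist c u < t := by rwa [dist_comm]
      have h3 : R ≤ dist z w + dist w x := by
        rw [← hRdef]; exact dist_triangle z w x
      have h4 : dist w x < t := mem_ball.mp hw
      linarith
    -- inner product computation
    have hinner : ∀ b : ℝ, (inner ℝ v (b • EuclideanSpace.single i (1:ℝ)) : ℝ) = b * v i := by
      intro b
      rw [real_inner_smul_right, EuclideanSpace.inner_single_right]
      simp
    have hnormb : ‖a • EuclideanSpace.single i (1:ℝ)‖ = a := by
      rw [norm_smul, EuclideanSpace.norm_single]
      simp [abs_of_nonneg hanonneg]
    have hsd2 : Real.sqrt d * Real.sqrt d = (d:ℝ) := Real.mul_self_sqrt (by positivity)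
    by_cases hsign : 0 ≤ v i
    · obtain ⟨u, huS, hu⟩ := hplus i
      refine key _ ?_ ⟨u, huS, mem_ball.mp hu⟩
      have hzc : z - (x + a • EuclideanSpace.single i (1:ℝ))
          = v - a • EuclideanSpace.single i (1:ℝ) := by
        rw [hv]; abel
      rw [hzc, norm_sub_sq_real, hinner, hnormb]
      have habs : |v i| = v i := abs_of_nonneg hsign
      have : R ≤ Real.sqrt d * v i := by rwa [habs] at hRle
      nlinarith [hsd, ht.le]
    · obtain ⟨u, huS, hu⟩ := hminus i
      refine key _ ?_ ⟨u, huS, mem_ball.mp hu⟩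
      have hzc : z - (x - a • EuclideanSpace.single i (1:ℝ))
          = v + a • EuclideanSpace.single i (1:ℝ) := by
        rw [hv]; abel
      rw [hzc, norm_add_sq_real, hinner, hnormb]
      have habs : |v i| = -(v i) := abs_of_neg (lt_of_not_ge hsign)
      have : R ≤ Real.sqrt d * (-(v i)) := by rwa [habs] at hRle
      nlinarith [hsd, ht.le]
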